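/- For any n₂ ≤ L², every configuration of minimal energy among the configurations with exactly n₂ particles of type 2 (all in Λ⁻⁻) is tb-tiled: every minimizer of H over V*,n₂ belongs to V*,n₂^{4n₂}. -/

import Mathlib

/- Common framework: two-type Kawasaki dynamics on a finite box in ℤ². -/

abbrev Site := ℤ × ℤ
abbrev Cell := ℤ × ℤ

/-- Nearest-neighbour adjacency on ℤ². -/
def adjacent (x y : Site) : Prop := |x.1 - y.1| + |x.2 - y.2| = 1

instance (x y : Site) : Decidable (adjacent x y) :=
  inferInstanceAs (Decidable (|x.1 - y.1| + |x.2 - y.2| = 1))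

/-- The four nearest neighbours of a site. -/
def nbrs (x : Site) : Finset Site :=
  {(x.1 + 1, x.2), (x.1 - 1, x.2), (x.1, x.2 + 1), (x.1, x.2 - 1)}

/-- Internal boundary ∂⁻Λ of a finite set Λ ⊂ ℤ². -/
def intBdry (Λ : Finset Site) : Finset Site := Λ.filter (fun x => ¬ nbrs x ⊆ Λ)

/-- Λ⁻ = Λ ∖ ∂⁻Λ. -/
def inner1 (Λ : Finset Site) : Finset Site := Λ \ intBdry Λ

/-- Λ⁻⁻ = Λ⁻ ∖ ∂⁻Λ⁻. -/
def inner2 (Λ : Finset Site) : Finset Site := inner1 Λ \ intBdry (inner1 Λ)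

/-- A configuration on Λ: each site of Λ carries 0 (empty), 1 (type 1) or 2 (type 2);
sites outside Λ are empty. -/
structure Config (Λ : Finset Site) where
  val : Site → Fin 3
  zero_outside : ∀ x, x ∉ Λ → val x = 0

/-- Number of particles of type 1. -/
def numType1 {Λ : Finset Site} (η : Config Λ) : ℕ := (Λ.filter (fun x => η.val x = 1)).card

/-- Number of particles of type 2. -/
def numType2 {Λ : Finset Site} (η : Config Λ) : ℕ := (Λ.filter (fun x => η.val x = 2)).card

/-- Number of active bonds: unordered n.n. pairs of sites of Λ⁻, one carrying a 1 and the
other a 2 (each such unordered pair is counted once, as the ordered pair (type1,type2)). -/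
def numBonds {Λ : Finset Site} (η : Config Λ) : ℕ :=
  ((inner1 Λ ×ˢ inner1 Λ).filter
    (fun p => adjacent p.1 p.2 ∧ η.val p.1 = 1 ∧ η.val p.2 = 2)).card

/-- The Hamiltonian H(η) = −U·B(η) + Δ1·n1(η) + Δ2·n2(η). -/
noncomputable def energy (U Δ1 Δ2 : ℝ) {Λ : Finset Site} (η : Config Λ) : ℝ :=
  -U * numBonds η + Δ1 * numType1 η + Δ2 * numType2 η

/-- Allowed moves of the Kawasaki dynamics: hopping inside Λ, creation and annihilation
at the internal boundary. -/
def Communicates {Λ : Finset Site} (η η' : Config Λ) : Prop :=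
  (∃ x ∈ Λ, ∃ y ∈ Λ, adjacent x y ∧ η.val x = 0 ∧ η.val y ≠ 0 ∧
      η'.val = Function.update (Function.update η.val x (η.val y)) y 0) ∨
  (∃ x ∈ intBdry Λ, ∃ v : Fin 3, v ≠ 0 ∧ η.val x = 0 ∧
      η'.val = Function.update η.val x v) ∨
  (∃ x ∈ intBdry Λ, η.val x ≠ 0 ∧ η'.val = Function.update η.val x 0)

/-- ω is a path of allowed moves from η to η′. -/
def IsPath {Λ : Finset Site} (ω : List (Config Λ)) (η η' : Config Λ) : Prop :=
  ω.head? = some η ∧ ω.getLast? = some η' ∧ ω.Chain' Communicates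

/-- Communication height between two sets of configurations:
Φ(A,B) = min over paths from A to B of the maximal energy along the path. -/
noncomputable def commHeightSet (U Δ1 Δ2 : ℝ) {Λ : Finset Site}
    (A B : Set (Config Λ)) : ℝ :=
  sInf {m : ℝ | ∃ η ∈ A, ∃ η' ∈ B, ∃ ω : List (Config Λ),
    IsPath ω η η' ∧ ∀ ξ ∈ ω, energy U Δ1 Δ2 ξ ≤ m}

/-- Communication height Φ(η,η′). -/
noncomputable def commHeight (U Δ1 Δ2 : ℝ) {Λ : Finset Site} (η η' : Config Λ) : ℝ :=
  commHeightSet U Δ1 Δ2 {η} {η'}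

/-- Stability level V_η = Φ(η, I_η) − H(η), where I_η = {ξ : H(ξ) < H(η)}. -/
noncomputable def stabLevel (U Δ1 Δ2 : ℝ) {Λ : Finset Site} (η : Config Λ) : ℝ :=
  commHeightSet U Δ1 Δ2 {η} {ξ : Config Λ | energy U Δ1 Δ2 ξ < energy U Δ1 Δ2 η}
    - energy U Δ1 Δ2 η

/-- The set of stable configurations (global minimizers of H). -/
def Xstab (U Δ1 Δ2 : ℝ) (Λ : Finset Site) : Set (Config Λ) :=
  {η | ∀ ξ : Config Λ, energy U Δ1 Δ2 η ≤ energy U Δ1 Δ2 ξ}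

/-- The set of metastable configurations (non-stable configurations of maximal
stability level). -/
def Xmeta (U Δ1 Δ2 : ℝ) (Λ : Finset Site) : Set (Config Λ) :=
  {η | η ∉ Xstab U Δ1 Δ2 Λ ∧
    ∀ ξ : Config Λ, ξ ∉ Xstab U Δ1 Δ2 Λ → stabLevel U Δ1 Δ2 ξ ≤ stabLevel U Δ1 Δ2 η}

/-- The empty configuration □. -/
def emptyConfig (Λ : Finset Site) : Config Λ := ⟨fun _ => 0, fun _ _ => rfl⟩

/-- The critical length ℓ* = ⌈Δ1/(4U − Δ1 − Δ2)⌉. -/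
noncomputable def lstar (U Δ1 Δ2 : ℝ) : ℤ := ⌈Δ1 / (4 * U - Δ1 - Δ2)⌉

/-- The box Λ: in dual coordinates u(x) = ((x1−x2)/2,(x1+x2)/2) the
(L+3/2)×(L+3/2) square centered at the origin, i.e. |x1−x2| ≤ L+1 and |x1+x2| ≤ L+1. -/
noncomputable def latBox (L : ℕ) : Finset Site :=
  (Finset.Icc (-(L : ℤ) - 1) ((L : ℤ) + 1) ×ˢ Finset.Icc (-(L : ℤ) - 1) ((L : ℤ) + 1)).filter
    (fun x => |x.1 - x.2| ≤ (L : ℤ) + 1 ∧ |x.1 + x.2| ≤ (L : ℤ) + 1)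

/-- The m×n dual rectangle of sites (in dual coordinates) with dual lower-left corner p
(in standard coordinates): sites p + i·(1,−1) + j·(1,1) for 0 ≤ i < m, 0 ≤ j < n.
All these sites have the same parity. -/
def dualRect (p : Site) (m n : ℕ) : Finset Site :=
  (Finset.range m ×ˢ Finset.range n).image
    (fun ij => ((p.1 + (ij.1 : ℤ) + (ij.2 : ℤ), p.2 + (ij.2 : ℤ) - (ij.1 : ℤ)) : Site))

/-- The sites adjacent to a set S but not in S. -/
def siteBorder (S : Finset Site) : Finset Site := S.biUnion nbrs \ S

/-- ⊞: the tb-tiled configurations whose particles of type 2 occupy an L×L square in dual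
coordinates filling Λ⁻ (type-2 sites in Λ⁻⁻, surrounding type-1 sites in Λ⁻); these are
the two largest checkerboard droplets (one of each parity). -/
def boxPlus (L : ℕ) : Set (Config (latBox L)) :=
  {η | ∃ p : Site,
      (∀ x, η.val x = 2 ↔ x ∈ dualRect p L L) ∧
      (∀ x, η.val x = 1 ↔ x ∈ siteBorder (dualRect p L L)) ∧
      dualRect p L L ⊆ inner2 (latBox L) ∧
      siteBorder (dualRect p L L) ⊆ inner1 (latBox L)}

/-- The active-bond relation between sites. -/
def bondRel {Λ : Finset Site} (η : Config Λ) (x y : Site) : Prop :=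
  x ∈ inner1 Λ ∧ y ∈ inner1 Λ ∧ adjacent x y ∧
  ((η.val x = 1 ∧ η.val y = 2) ∨ (η.val x = 2 ∧ η.val y = 1))

/-- C is a cluster of η: a maximal connected component of the occupied sites under the
active-bond relation. -/
def IsCluster {Λ : Finset Site} (η : Config Λ) (C : Finset Site) : Prop :=
  ∃ x : Site, η.val x ≠ 0 ∧ ∀ y : Site, y ∈ C ↔ Relation.ReflTransGen (bondRel η) x y

/-- The occupied sites of η form a single cluster. -/
def SingleCluster {Λ : Finset Site} (η : Config Λ) : Prop :=
  ∃ x : Site, η.val x ≠ 0 ∧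
    ∀ y : Site, η.val y ≠ 0 → Relation.ReflTransGen (bondRel η) x y

/-- Dual coordinates, renormalized to land in ℤ² (within a fixed parity class this maps
dual neighbours to adjacent cells). -/
def cellOf (x : Site) : Cell := ((x.1 - x.2).fdiv 2, (x.1 + x.2).fdiv 2)

/-- The sites of Λ occupied by particles of type 2. -/
def type2Sites {Λ : Finset Site} (η : Config Λ) : Finset Site :=
  Λ.filter (fun x => η.val x = 2)

/-- Tile support of a configuration: the polyomino in dual coordinates given by the unit
squares centered at the particles of type 2. -/
def tileSupport {Λ : Finset Site} (η : Config Λ) : Finset Cell :=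
  (type2Sites η).image cellOf

/- ----------  Polyominoes ---------- -/

/-- Perimeter of a polyomino (number of boundary edges, inner boundaries included). -/
def perim (A : Finset Cell) : ℕ :=
  A.sum (fun c => ((nbrs c).filter (fun d => d ∉ A)).card)

def adjIn (A : Finset Cell) (x y : Cell) : Prop := x ∈ A ∧ y ∈ A ∧ adjacent x y

/-- Connectedness of a polyomino. -/
def PolyConnected (A : Finset Cell) : Prop :=
  A.Nonempty ∧ ∀ x ∈ A, ∀ y ∈ A, Relation.ReflTransGen (adjIn A) x y

/-- Number of holes: bounded (= finite) connected components of the complement. -/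
noncomputable def numHoles (A : Finset Cell) : ℕ :=
  Set.ncard {C : Set Cell | ∃ d : Cell, d ∉ A ∧
    C = {e : Cell | Relation.ReflTransGen (fun u v => adjacent u v ∧ u ∉ A ∧ v ∉ A) d e} ∧
    C.Finite}

/-- The four cells having lattice point v as a corner. -/
def cellsAt (v : Cell) : Finset Cell :=
  {(v.1 - 1, v.2 - 1), (v.1 - 1, v.2), (v.1, v.2 - 1), v}

/-- The lattice points that are corners of cells of A. -/
def vertexSet (A : Finset Cell) : Finset Cell :=
  A.biUnion (fun c => {c, (c.1 + 1, c.2), (c.1, c.2 + 1), (c.1 + 1, c.2 + 1)})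

def occAt (A : Finset Cell) (v : Cell) : ℕ := ((cellsAt v).filter (fun c => c ∈ A)).card

/-- Number of convex corners ψ(A): vertices with exactly one incident occupied cell. -/
def convexCorners (A : Finset Cell) : ℕ :=
  (vertexSet A).sum (fun v => if occAt A v = 1 then 1 else 0)

/-- Number of concave corners φ(A): a vertex with three incident occupied cells counts
once, a vertex with two diagonally opposite occupied cells counts twice. -/
def concaveCorners (A : Finset Cell) : ℕ :=
  (vertexSet A).sum (fun v =>
    if occAt A v = 3 then 1
    else if occAt A v = 2 ∧ (((v.1 - 1, v.2 - 1) ∈ A ∧ v ∈ A) ∨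
          ((v.1 - 1, v.2) ∈ A ∧ (v.1, v.2 - 1) ∈ A)) then 2
    else 0)

/-- T(A) = 2P(A) + ψ(A) − φ(A). -/
def Tpoly (A : Finset Cell) : ℤ :=
  2 * (perim A : ℤ) + (convexCorners A : ℤ) - (concaveCorners A : ℤ)

/-- For connected polyominoes, T(A) = 2P(A) + 4 − 4Q(A). -/
noncomputable def Tconn (A : Finset Cell) : ℤ :=
  2 * (perim A : ℤ) + 4 - 4 * (numHoles A : ℤ)

/-- Width (number of columns) of the circumscribing rectangle. -/
def polyWidth (A : Finset Cell) : ℤ :=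
  (WithBot.unbotD 0 (A.image Prod.fst).max) - (WithTop.untopD 0 (A.image Prod.fst).min) + 1

/-- Height (number of rows) of the circumscribing rectangle. -/
def polyHeight (A : Finset Cell) : ℤ :=
  (WithBot.unbotD 0 (A.image Prod.snd).max) - (WithTop.untopD 0 (A.image Prod.snd).min) + 1

/-- A polyomino is monotone if its perimeter equals the perimeter of its circumscribing
rectangle. -/
def MonotonePoly (A : Finset Cell) : Prop :=
  (perim A : ℤ) = 2 * (polyWidth A + polyHeight A)

/-- The reference standard polyomino: an (l+ζ)×l rectangle (quasi-square, ζ ∈ {0,1})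
with a bar of length k attached to a longest side, starting at offset a. -/
def baseStd (l ζ a k : ℕ) : Finset Cell :=
  ((Finset.range (l + ζ)) ×ˢ (Finset.range l)).image
      (fun q => (((q.1 : ℤ), (q.2 : ℤ)) : Cell))
    ∪ (Finset.range k).image (fun i => ((((a + i : ℕ) : ℤ), (l : ℤ)) : Cell))

/-- The eight symmetries of the square lattice. -/
def dihedralMaps : List (Cell → Cell) :=
  [fun c => (c.1, c.2), fun c => (-c.1, c.2), fun c => (c.1, -c.2), fun c => (-c.1, -c.2),
   fun c => (c.2, c.1), fun c => (-c.2, c.1), fun c => (c.2, -c.1), fun c => (-c.2, -c.1)]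

/-- A standard polyomino: a quasi-square with possibly a bar attached to one of its
longest sides (up to lattice symmetries and translations). -/
def IsStandardPoly (A : Finset Cell) : Prop :=
  ∃ l ζ a k : ℕ, 1 ≤ l ∧ ζ ≤ 1 ∧ a + k ≤ l + ζ ∧
    ∃ f ∈ dihedralMaps, ∃ t : Cell,
      A = (baseStd l ζ a k).image (fun c => (((f c).1 + t.1, (f c).2 + t.2) : Cell))

/- ----------  tb-tiled configurations ---------- -/

/-- V_{*,k}: configurations with exactly k particles of type 2, all lying in Λ⁻⁻. -/
def VStar (Λ : Finset Site) (k : ℕ) : Set (Config Λ) :=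
  {η | numType2 η = k ∧ ∀ x, η.val x = 2 → x ∈ inner2 Λ}

/-- V_{*,k}^{4k}: configurations of V_{*,k} with exactly 4k active bonds and no isolated
particle of type 1 (the tb-tiled configurations with k particles of type 2). -/
def VTiled (Λ : Finset Site) (k : ℕ) : Set (Config Λ) :=
  {η | η ∈ VStar Λ k ∧ numBonds η = 4 * k ∧
    ∀ x, η.val x = 1 → ∃ y ∈ nbrs x, η.val y = 2}

/-- All particles of type 2 have the same (site) parity. -/
def SameParity2 {Λ : Finset Site} (η : Config Λ) : Prop :=
  ∀ x y : Site, η.val x = 2 → η.val y = 2 → (x.1 + x.2) % 2 = (y.1 + y.2) % 2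

/-- A standard configuration: tile support a standard polyomino (all type-2 particles of
one parity). -/
def IsStandardConfig {Λ : Finset Site} (η : Config Λ) : Prop :=
  SameParity2 η ∧ IsStandardPoly (tileSupport η)

/-- A tb-tiled configuration: at least one particle of type 2, every particle of type 2
saturated, no isolated particle of type 1. -/
def IsTbTiled {Λ : Finset Site} (η : Config Λ) : Prop :=
  (∃ x, η.val x = 2) ∧
  (∀ x, η.val x = 2 → ∀ y ∈ nbrs x, η.val y = 1) ∧
  (∀ x, η.val x = 1 → ∃ y ∈ nbrs x, η.val y = 2)

/-- η is the tb-tiled droplet with type-2 sites S: type-2 exactly on S, type-1 exactly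
on the border of S, empty elsewhere. -/
def IsTbDroplet {Λ : Finset Site} (η : Config Λ) (S : Finset Site) : Prop :=
  (∀ x, η.val x = 2 ↔ x ∈ S) ∧ (∀ x, η.val x = 1 ↔ x ∈ siteBorder S)

/- ----------  cluster-wise quantities ---------- -/

def numType1In {Λ : Finset Site} (η : Config Λ) (C : Finset Site) : ℕ :=
  (C.filter (fun x => η.val x = 1)).card

def numType2In {Λ : Finset Site} (η : Config Λ) (C : Finset Site) : ℕ :=
  (C.filter (fun x => η.val x = 2)).card

def numBondsIn {Λ : Finset Site} (η : Config Λ) (C : Finset Site) : ℕ :=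
  ((C ×ˢ C).filter (fun q => q.1 ∈ inner1 Λ ∧ q.2 ∈ inner1 Λ ∧ adjacent q.1 q.2 ∧
    η.val q.1 = 1 ∧ η.val q.2 = 2)).card

def tileSupportIn {Λ : Finset Site} (η : Config Λ) (C : Finset Site) : Finset Cell :=
  (C.filter (fun x => η.val x = 2)).image cellOf

/-- Number of active bonds incident to the site x. -/
def bondDeg {Λ : Finset Site} (η : Config Λ) (x : Site) : ℕ :=
  ((nbrs x).filter (fun y => x ∈ inner1 Λ ∧ y ∈ inner1 Λ ∧
    ((η.val x = 1 ∧ η.val y = 2) ∨ (η.val x = 2 ∧ η.val y = 1)))).card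

/-- Number of missing bonds of the type-1 particles of C. -/
def missingBonds {Λ : Finset Site} (η : Config Λ) (C : Finset Site) : ℤ :=
  ∑ x ∈ C.filter (fun x => η.val x = 1), (4 - (bondDeg η x : ℤ))

/- ----------  geometry for the energy-reduction mechanisms ---------- -/

/-- A site is lattice-connecting: there is a n.n. path of empty sites from it to ∂⁻Λ. -/
def LatticeConnecting {Λ : Finset Site} (η : Config Λ) (x : Site) : Prop :=
  ∃ l : List Site, List.Chain adjacent x l ∧
    (x :: l).getLast (List.cons_ne_nil x l) ∈ intBdry Λ ∧
    ∀ y ∈ l, y ∈ Λ ∧ η.val y = 0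

/-- A pending dimer (x,y): a lattice-connecting type-1 particle x whose unique active
bond is with the adjacent type-2 particle y, which has at most three active bonds. -/
def PendingDimer {Λ : Finset Site} (η : Config Λ) (x y : Site) : Prop :=
  bondRel η x y ∧ η.val x = 1 ∧ η.val y = 2 ∧ LatticeConnecting η x ∧
  bondDeg η x = 1 ∧ bondDeg η y ≤ 3

/-- The sites of a horizontal (in dual coordinates) beam of length l: l+1 particles of
type 1 at mutual dual distance 1, with left-most site p. -/
def beamSites (p : Site) (l : ℕ) : Finset Site :=
  (Finset.range (l + 1)).image (fun i : ℕ => ((p.1 + (i : ℤ), p.2 - (i : ℤ)) : Site))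

/-- The center row of the (south) support of the beam. -/
def centerSites (p : Site) (l : ℕ) : Finset Site :=
  (Finset.range l).image (fun i : ℕ => ((p.1 + (i : ℤ), p.2 - 1 - (i : ℤ)) : Site))

/-- The basement row of the (south) support of the beam. -/
def basementSites (p : Site) (l : ℕ) : Finset Site :=
  (Finset.range (l + 1)).image (fun i : ℕ => ((p.1 - 1 + (i : ℤ), p.2 - 1 - (i : ℤ)) : Site))

/-- The (south) support of a beam/bridge. -/
def bridgeSupport (p : Site) (l : ℕ) : Finset Site :=
  beamSites p l ∪ centerSites p l ∪ basementSites p l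

/-- The 12 sites of a slot: a 4×4 block minus its four corner sites; p is the lower-left
corner of the block. -/
def slotSites (p : Site) : Finset Site :=
  ((Finset.range 4 ×ˢ Finset.range 4).image
      (fun ij => ((p.1 + (ij.1 : ℤ), p.2 + (ij.2 : ℤ)) : Site))) \
    {(p.1, p.2), (p.1 + 3, p.2), (p.1, p.2 + 3), (p.1 + 3, p.2 + 3)}

/-- The slot-conjugate (diagonally opposite) ordered pairs of central sites of a slot. -/
def slotDiagPairs (p : Site) : List (Site × Site) :=
  [((p.1 + 1, p.2 + 1), (p.1 + 2, p.2 + 2)), ((p.1 + 2, p.2 + 2), (p.1 + 1, p.2 + 1)),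
   ((p.1 + 1, p.2 + 2), (p.1 + 2, p.2 + 1)), ((p.1 + 2, p.2 + 1), (p.1 + 1, p.2 + 2))]

/-- The type-2 sites of the bar added on side d (0 = north, 1 = south, 2 = east,
3 = west, in dual coordinates) of the m×n dual rectangle with corner p. -/
def sideBar (p : Site) (m n : ℕ) (d : Fin 4) : Finset Site :=
  if d = 0 then dualRect (p.1 + (n : ℤ), p.2 + (n : ℤ)) m 1
  else if d = 1 then dualRect (p.1 - 1, p.2 - 1) m 1
  else if d = 2 then dualRect (p.1 + (m : ℤ), p.2 - (m : ℤ)) 1 n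
  else dualRect (p.1 - 1, p.2 + 1) 1 n

/-- The length of side d of an m×n dual rectangle. -/
def sideLen (m n : ℕ) (d : Fin 4) : ℕ := if (d : ℕ) ≤ 1 then m else n

/-- The type-2 sites left after removing the outermost bar on side d of the m×n dual
rectangle with corner p. -/
def shrunkRect (p : Site) (m n : ℕ) (d : Fin 4) : Finset Site :=
  if d = 0 then dualRect p m (n - 1)
  else if d = 1 then dualRect (p.1 + 1, p.2 + 1) m (n - 1)
  else if d = 2 then dualRect p (m - 1) n
  else dualRect (p.1 + 1, p.2 - 1) (m - 1) n


/- ----------  Auxiliary lemmas for the proof of Statement 10 ---------- -/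

set_option maxRecDepth 8000

namespace S10

lemma adjacent_iff {x y : Site} :
    adjacent x y ↔ ((x.1 - y.1).natAbs + (x.2 - y.2).natAbs = 1) := by
  unfold adjacent
  rw [Int.abs_eq_natAbs, Int.abs_eq_natAbs]
  omega

lemma mem_nbrs {x y : Site} : y ∈ nbrs x ↔ adjacent x y := by
  rw [adjacent_iff]
  simp [nbrs, Prod.ext_iff]
  omega

lemma adjacent_symm {x y : Site} (h : adjacent x y) : adjacent y x := by
  rw [adjacent_iff] at *; omega

lemma adjacent_ne {x y : Site} (h : adjacent x y) : x ≠ y := by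
  rw [adjacent_iff] at h
  intro he; rw [he] at h; omega

lemma card_nbrs (x : Site) : (nbrs x).card = 4 := by
  rw [nbrs]
  rw [Finset.card_insert_of_notMem (by intro hm; simp [Prod.ext_iff] at hm; try omega),
      Finset.card_insert_of_notMem (by intro hm; simp [Prod.ext_iff] at hm; try omega),
      Finset.card_insert_of_notMem (by intro hm; simp [Prod.ext_iff] at hm; try omega),
      Finset.card_singleton]

/- box membership characterizations -/

lemma mem_latBox {L : ℕ} {x : Site} :
    x ∈ latBox L ↔ ((x.1 - x.2).natAbs ≤ L + 1 ∧ (x.1 + x.2).natAbs ≤ L + 1) := by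
  unfold latBox
  rw [Finset.mem_filter, Finset.mem_product, Finset.mem_Icc, Finset.mem_Icc,
      Int.abs_eq_natAbs, Int.abs_eq_natAbs]
  omega

lemma mem_inner1 {L : ℕ} {x : Site} :
    x ∈ inner1 (latBox L) ↔ ((x.1 - x.2).natAbs ≤ L ∧ (x.1 + x.2).natAbs ≤ L) := by
  unfold inner1 intBdry
  rw [Finset.mem_sdiff, Finset.mem_filter]
  constructor
  · rintro ⟨hx, hb⟩
    have hsub : nbrs x ⊆ latBox L := by
      by_contra h
      exact hb ⟨hx, h⟩
    have h1 := mem_latBox.1 (hsub (by rw [mem_nbrs, adjacent_iff]; omega :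
      ((x.1 + 1, x.2) : Site) ∈ nbrs x))
    have h2 := mem_latBox.1 (hsub (by rw [mem_nbrs, adjacent_iff]; omega :
      ((x.1 - 1, x.2) : Site) ∈ nbrs x))
    have h3 := mem_latBox.1 (hsub (by rw [mem_nbrs, adjacent_iff]; omega :
      ((x.1, x.2 + 1) : Site) ∈ nbrs x))
    have h4 := mem_latBox.1 (hsub (by rw [mem_nbrs, adjacent_iff]; omega :
      ((x.1, x.2 - 1) : Site) ∈ nbrs x))
    simp only [] at h1 h2 h3 h4
    omega
  · intro h
    have hx : x ∈ latBox L := mem_latBox.2 (by omega)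
    refine ⟨hx, ?_⟩
    rintro ⟨-, hb⟩
    apply hb
    intro y hy
    rw [mem_nbrs, adjacent_iff] at hy
    rw [mem_latBox]
    omega

lemma mem_inner2 {L : ℕ} {x : Site} :
    x ∈ inner2 (latBox L) ↔
      ((x.1 - x.2).natAbs + 1 ≤ L ∧ (x.1 + x.2).natAbs + 1 ≤ L) := by
  unfold inner2 intBdry
  rw [Finset.mem_sdiff, Finset.mem_filter]
  constructor
  · rintro ⟨hx, hb⟩
    have hsub : nbrs x ⊆ inner1 (latBox L) := by
      by_contra h
      exact hb ⟨hx, h⟩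
    have h1 := mem_inner1.1 (hsub (by rw [mem_nbrs, adjacent_iff]; omega :
      ((x.1 + 1, x.2) : Site) ∈ nbrs x))
    have h2 := mem_inner1.1 (hsub (by rw [mem_nbrs, adjacent_iff]; omega :
      ((x.1 - 1, x.2) : Site) ∈ nbrs x))
    simp only [] at h1 h2
    omega
  · intro h
    have hx : x ∈ inner1 (latBox L) := mem_inner1.2 (by omega)
    refine ⟨hx, ?_⟩
    rintro ⟨-, hb⟩
    apply hb
    intro y hy
    rw [mem_nbrs, adjacent_iff] at hy
    rw [mem_inner1]
    omega

lemma inner2_subset_inner1 {L : ℕ} : inner2 (latBox L) ⊆ inner1 (latBox L) := by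
  intro x hx
  rw [mem_inner2] at hx
  rw [mem_inner1]
  omega

lemma inner1_subset_latBox {L : ℕ} : inner1 (latBox L) ⊆ latBox L := by
  intro x hx
  rw [mem_inner1] at hx
  rw [mem_latBox]
  omega

lemma nbrs_inner2 {L : ℕ} {x y : Site} (hx : x ∈ inner2 (latBox L)) (hy : y ∈ nbrs x) :
    y ∈ inner1 (latBox L) := by
  rw [mem_inner2] at hx
  rw [mem_nbrs, adjacent_iff] at hy
  rw [mem_inner1]
  omega

end S10

namespace S10

/-- The set of ordered pairs (neighbour, site) over a finset, and its cardinality. -/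
def pairT (S : Finset Site) : Finset (Site × Site) :=
  S.biUnion (fun x => (nbrs x).image (fun y => (y, x)))

lemma mem_pairT {S : Finset Site} {p : Site × Site} :
    p ∈ pairT S ↔ p.2 ∈ S ∧ p.1 ∈ nbrs p.2 := by
  unfold pairT
  rw [Finset.mem_biUnion]
  constructor
  · rintro ⟨x, hx, hp⟩
    obtain ⟨y, hy, rfl⟩ := Finset.mem_image.1 hp
    exact ⟨hx, hy⟩
  · rintro ⟨h2, h1⟩
    exact ⟨p.2, h2, Finset.mem_image.2 ⟨p.1, h1, by rw [Prod.mk.eta]⟩⟩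

lemma card_pairT (S : Finset Site) : (pairT S).card = 4 * S.card := by
  unfold pairT
  rw [Finset.card_biUnion]
  · have : ∀ x ∈ S, ((nbrs x).image (fun y => (y, x))).card = 4 := by
      intro x _
      rw [Finset.card_image_of_injective _ (fun a b h => (Prod.ext_iff.1 h).1), card_nbrs]
    rw [Finset.sum_congr rfl this, Finset.sum_const, smul_eq_mul, mul_comm]
  · intro x _ x' _ hxx
    rw [Function.onFun, Finset.disjoint_left]
    intro p hp hp'
    obtain ⟨y, _, rfl⟩ := Finset.mem_image.1 hp
    obtain ⟨y', _, h⟩ := Finset.mem_image.1 hp'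
    exact hxx ((Prod.ext_iff.1 h).2.symm)

end S10

namespace S10

lemma sqrt_facts (k : ℕ) (hk : 1 ≤ k) :
    1 ≤ Nat.sqrt k ∧ Nat.sqrt k * Nat.sqrt k ≤ k ∧ k < (Nat.sqrt k + 1) * (Nat.sqrt k + 1) := by
  have h1 : Nat.sqrt k * Nat.sqrt k ≤ k := by
    have := Nat.sqrt_le' k
    simpa [pow_two] using this
  have h2 : k < (Nat.sqrt k + 1) * (Nat.sqrt k + 1) := by
    have := Nat.lt_succ_sqrt' k
    simpa [pow_two] using this
  refine ⟨?_, h1, h2⟩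
  by_contra h
  have h0 : Nat.sqrt k = 0 := by omega
  rw [h0] at h2
  omega

end S10

namespace S10

def cornersOf (c : Cell) : Finset Cell :=
  {c, (c.1 + 1, c.2), (c.1, c.2 + 1), (c.1 + 1, c.2 + 1)}

lemma master (A : Finset Cell) (hA : A.Nonempty) :
    ∃ r m : ℕ, 1 ≤ r ∧ 1 ≤ m ∧ A.card ≤ r * m ∧
      A.card + r + m + 1 ≤ (A.biUnion cornersOf).card := by
  classical
  set R := A.image Prod.snd with hRdef
  have hRne : R.Nonempty := hA.image _
  set row : ℤ → Finset Cell := fun y => A.filter (fun c => c.2 = y) with hrow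
  set X : ℤ → Finset ℤ :=
    fun y => ((row y).image Prod.fst) ∪ ((row y).image (fun c => c.1 + 1)) with hX
  -- each occupied row has X-card ≥ row-card + 1
  have hrowne : ∀ y ∈ R, (row y).Nonempty := by
    intro y hy
    obtain ⟨c, hc, rfl⟩ := Finset.mem_image.1 hy
    exact ⟨c, Finset.mem_filter.2 ⟨hc, rfl⟩⟩
  have hrowcard : ∀ y, ((row y).image Prod.fst).card = (row y).card := by
    intro y
    apply Finset.card_image_of_injOn
    intro c hc d hd h1
    have hc2 := (Finset.mem_filter.1 hc).2
    have hd2 := (Finset.mem_filter.1 hd).2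
    exact Prod.ext h1 (hc2.trans hd2.symm)
  have hXcard : ∀ y ∈ R, (row y).card + 1 ≤ (X y).card := by
    intro y hy
    have hne : ((row y).image Prod.fst).Nonempty := (hrowne y hy).image _
    set M := ((row y).image Prod.fst).max' hne with hM
    have hMmem : M ∈ (row y).image Prod.fst := Finset.max'_mem _ _
    have hMnot : M + 1 ∉ (row y).image Prod.fst := by
      intro h
      have := Finset.le_max' _ _ h
      omega
    have hsub : insert (M + 1) ((row y).image Prod.fst) ⊆ X y := by
      intro t ht
      rcases Finset.mem_insert.1 ht with rfl | ht
      · apply Finset.mem_union_right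
        obtain ⟨c, hc, hc1⟩ := Finset.mem_image.1 hMmem
        exact Finset.mem_image.2 ⟨c, hc, by omega⟩
      · exact Finset.mem_union_left _ ht
    calc (row y).card + 1 = (insert (M+1) ((row y).image Prod.fst)).card := by
            rw [Finset.card_insert_of_notMem hMnot, hrowcard]
      _ ≤ (X y).card := Finset.card_le_card hsub
  -- total count
  have hcards : ∑ y ∈ R, (row y).card = A.card := by
    rw [hrow]
    exact (Finset.card_eq_sum_card_fiberwise (fun c hc => Finset.mem_image_of_mem _ hc)).symm
  -- max row
  obtain ⟨ys, hysR, hysmax⟩ := Finset.exists_max_image R (fun y => (row y).card) hRne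
  set r := R.card with hr
  set m := (row ys).card with hm
  have hr1 : 1 ≤ r := Finset.card_pos.2 hRne
  have hm1 : 1 ≤ m := Finset.card_pos.2 (hrowne ys hysR)
  have hkrm : A.card ≤ r * m := by
    rw [← hcards]
    calc ∑ y ∈ R, (row y).card ≤ ∑ _y ∈ R, m := Finset.sum_le_sum (fun y hy => hysmax y hy)
      _ = r * m := by rw [Finset.sum_const, smul_eq_mul]
  refine ⟨r, m, hr1, hm1, hkrm, ?_⟩
  -- the vertex set
  set V := A.biUnion cornersOf with hV
  set W := V.image Prod.snd with hW
  have hVcard : V.card = ∑ w ∈ W, (V.filter (fun v => v.2 = w)).card :=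
    Finset.card_eq_sum_card_fiberwise (fun v hv => Finset.mem_image_of_mem _ hv)
  have hmemV : ∀ v : Cell, v ∈ V ↔ ∃ c ∈ A, v ∈ cornersOf c := by
    intro v; simp [hV, Finset.mem_biUnion]
  have hline : ∀ w : ℤ, V.filter (fun v => v.2 = w)
      = ((X (w-1)) ∪ (X w)).image (fun t => ((t, w) : Cell)) := by
    intro w
    ext v
    simp only [Finset.mem_filter, Finset.mem_image, Finset.mem_union]
    constructor
    · rintro ⟨hv, hv2⟩
      obtain ⟨c, hc, hcor⟩ := (hmemV v).1 hv
      simp only [cornersOf, Finset.mem_insert, Finset.mem_singleton] at hcor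
      rcases hcor with h | h | h | h
      · refine ⟨c.1, Or.inr (Finset.mem_union_left _
          (Finset.mem_image.2 ⟨c, Finset.mem_filter.2 ⟨hc, by rw [h] at hv2; exact hv2⟩, rfl⟩)), ?_⟩
        rw [h] at hv2 ⊢; exact Prod.ext rfl hv2.symm
      · refine ⟨c.1 + 1, Or.inr (Finset.mem_union_right _
          (Finset.mem_image.2 ⟨c, Finset.mem_filter.2 ⟨hc, by rw [h] at hv2; exact hv2⟩, rfl⟩)), ?_⟩
        rw [h] at hv2 ⊢
        exact Prod.ext_iff.mpr ⟨rfl, hv2.symm⟩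
      · refine ⟨c.1, Or.inl (Finset.mem_union_left _
          (Finset.mem_image.2 ⟨c, Finset.mem_filter.2 ⟨hc, by rw [h] at hv2; simp at hv2 ⊢; omega⟩, rfl⟩)), ?_⟩
        rw [h] at hv2 ⊢
        exact Prod.ext_iff.mpr ⟨rfl, hv2.symm⟩
      · refine ⟨c.1 + 1, Or.inl (Finset.mem_union_right _
          (Finset.mem_image.2 ⟨c, Finset.mem_filter.2 ⟨hc, by rw [h] at hv2; simp at hv2 ⊢; omega⟩, rfl⟩)), ?_⟩
        rw [h] at hv2 ⊢
        exact Prod.ext_iff.mpr ⟨rfl, hv2.symm⟩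
    · rintro ⟨t, ht, rfl⟩
      refine ⟨?_, rfl⟩
      rw [hmemV]
      rcases ht with ht | ht
      · rcases Finset.mem_union.1 ht with ht | ht
        · obtain ⟨c, hc, rfl⟩ := Finset.mem_image.1 ht
          have hc1 := (Finset.mem_filter.1 hc).1
          have hc2 := (Finset.mem_filter.1 hc).2
          refine ⟨c, hc1, ?_⟩
          simp [cornersOf, Prod.ext_iff]
          omega
        · obtain ⟨c, hc, rfl⟩ := Finset.mem_image.1 ht
          have hc1 := (Finset.mem_filter.1 hc).1
          have hc2 := (Finset.mem_filter.1 hc).2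
          refine ⟨c, hc1, ?_⟩
          simp [cornersOf, Prod.ext_iff]
          omega
      · rcases Finset.mem_union.1 ht with ht | ht
        · obtain ⟨c, hc, rfl⟩ := Finset.mem_image.1 ht
          have hc1 := (Finset.mem_filter.1 hc).1
          have hc2 := (Finset.mem_filter.1 hc).2
          refine ⟨c, hc1, ?_⟩
          simp [cornersOf, Prod.ext_iff]
          omega
        · obtain ⟨c, hc, rfl⟩ := Finset.mem_image.1 ht
          have hc1 := (Finset.mem_filter.1 hc).1
          have hc2 := (Finset.mem_filter.1 hc).2
          refine ⟨c, hc1, ?_⟩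
          simp [cornersOf, Prod.ext_iff]
          omega
  have hlinecard : ∀ w : ℤ, (V.filter (fun v => v.2 = w)).card = ((X (w-1)) ∪ (X w)).card := by
    intro w
    rw [hline w]
    exact Finset.card_image_of_injective _ (fun a b h => by simpa [Prod.ext_iff] using h)
  -- R and R+1 inside W
  have hRW : ∀ y ∈ R, y ∈ W := by
    intro y hy
    obtain ⟨c, hc, rfl⟩ := Finset.mem_image.1 hy
    refine Finset.mem_image.2 ⟨c, ?_, rfl⟩
    rw [hmemV]
    exact ⟨c, hc, by simp [cornersOf]⟩
  have hRW1 : ∀ y ∈ R, y + 1 ∈ W := by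
    intro y hy
    obtain ⟨c, hc, rfl⟩ := Finset.mem_image.1 hy
    refine Finset.mem_image.2 ⟨(c.1, c.2+1), ?_, rfl⟩
    rw [hmemV]
    exact ⟨c, hc, by simp [cornersOf]⟩
  -- main chain
  have step1 : ∑ w ∈ W, ((X (w-1)) ∪ (X w)).card
      ≥ ∑ w ∈ W.filter (fun w => w ≤ ys), (X w).card
        + ∑ w ∈ W.filter (fun w => ¬ w ≤ ys), (X (w-1)).card := by
    rw [ge_iff_le, ← Finset.sum_filter_add_sum_filter_not W (fun w => w ≤ ys)]
    apply add_le_add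
    · exact Finset.sum_le_sum (fun w _ => Finset.card_le_card Finset.subset_union_right)
    · exact Finset.sum_le_sum (fun w _ => Finset.card_le_card Finset.subset_union_left)
  have step2 : ∑ y ∈ R.filter (fun y => y ≤ ys), (X y).card
      ≤ ∑ w ∈ W.filter (fun w => w ≤ ys), (X w).card := by
    apply Finset.sum_le_sum_of_subset
    intro y hy
    have := Finset.mem_filter.1 hy
    exact Finset.mem_filter.2 ⟨hRW y this.1, this.2⟩
  have step3 : ∑ y ∈ R.filter (fun y => ys ≤ y), (X y).card
      ≤ ∑ w ∈ W.filter (fun w => ¬ w ≤ ys), (X (w-1)).card := by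
    have himg : ∑ y ∈ R.filter (fun y => ys ≤ y), (X y).card
        = ∑ w ∈ (R.filter (fun y => ys ≤ y)).image (fun y => y + 1), (X (w-1)).card := by
      rw [Finset.sum_image (by intro a _ b _ h; exact add_right_cancel h)]
      apply Finset.sum_congr rfl
      intro y _
      norm_num
    rw [himg]
    apply Finset.sum_le_sum_of_subset
    intro w hw
    obtain ⟨y, hy, rfl⟩ := Finset.mem_image.1 hw
    have hy' := Finset.mem_filter.1 hy
    exact Finset.mem_filter.2 ⟨hRW1 y hy'.1, by omega⟩
  have step4 : ∑ y ∈ R.filter (fun y => y ≤ ys), (X y).card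
      + ∑ y ∈ R.filter (fun y => ys ≤ y), (X y).card
      = ∑ y ∈ R, (X y).card + (X ys).card := by
    have hsplit : R.filter (fun y => ys ≤ y) = insert ys (R.filter (fun y => ys < y)) := by
      ext y
      simp only [Finset.mem_filter, Finset.mem_insert]
      constructor
      · rintro ⟨h1, h2⟩
        rcases eq_or_lt_of_le h2 with h | h
        · exact Or.inl h.symm
        · exact Or.inr ⟨h1, h⟩
      · rintro (rfl | ⟨h1, h2⟩)
        · exact ⟨hysR, le_refl _⟩
        · exact ⟨h1, le_of_lt h2⟩
    rw [hsplit, Finset.sum_insert (by simp)]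
    have : ∑ y ∈ R.filter (fun y => y ≤ ys), (X y).card
        + ∑ y ∈ R.filter (fun y => ys < y), (X y).card = ∑ y ∈ R, (X y).card := by
      rw [← Finset.sum_filter_add_sum_filter_not R (fun y => y ≤ ys)]
      congr 1
      apply Finset.sum_congr _ (fun _ _ => rfl)
      ext y
      simp only [Finset.mem_filter]
      constructor
      · rintro ⟨h1, h2⟩; exact ⟨h1, by omega⟩
      · rintro ⟨h1, h2⟩; exact ⟨h1, by omega⟩
    omega
  have step5 : A.card + r ≤ ∑ y ∈ R, (X y).card := by
    calc A.card + r = ∑ y ∈ R, (row y).card + ∑ _y ∈ R, 1 := by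
          rw [hcards, Finset.sum_const, smul_eq_mul, mul_one]
      _ = ∑ y ∈ R, ((row y).card + 1) := by rw [Finset.sum_add_distrib]
      _ ≤ ∑ y ∈ R, (X y).card := Finset.sum_le_sum (fun y hy => hXcard y hy)
  have step6 : m + 1 ≤ (X ys).card := hXcard ys hysR
  calc A.card + r + m + 1 ≤ (∑ y ∈ R, (X y).card) + (X ys).card := by omega
    _ = ∑ y ∈ R.filter (fun y => y ≤ ys), (X y).card
        + ∑ y ∈ R.filter (fun y => ys ≤ y), (X y).card := step4.symm
    _ ≤ ∑ w ∈ W.filter (fun w => w ≤ ys), (X w).card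
        + ∑ w ∈ W.filter (fun w => ¬ w ≤ ys), (X (w-1)).card := add_le_add step2 step3
    _ ≤ ∑ w ∈ W, ((X (w-1)) ∪ (X w)).card := step1
    _ = V.card := by
        rw [hVcard]
        exact (Finset.sum_congr rfl (fun w _ => hlinecard w)).symm

end S10

namespace S10

/-- cell coords of an even site -/
def gE (x : Site) : Cell := ((x.1 + x.2)/2, (x.2 - x.1)/2)
/-- cell coords of an odd site (corner index) -/
def gO (y : Site) : Cell := ((y.1 + y.2 + 1)/2, (y.2 - y.1 + 1)/2)

lemma boundary_card_even (A : Finset Site) (hA : A.Nonempty)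
    (hpar : ∀ x ∈ A, (x.1 + x.2) % 2 = 0) :
    ∃ r m : ℕ, 1 ≤ r ∧ 1 ≤ m ∧ A.card ≤ r * m ∧
      A.card + r + m + 1 ≤ (A.biUnion nbrs).card := by
  classical
  set A' := A.image gE with hA'
  have hgEinj : ∀ x ∈ A, ∀ y ∈ A, gE x = gE y → x = y := by
    intro x hx y hy h
    have hx2 := hpar x hx
    have hy2 := hpar y hy
    simp only [gE, Prod.ext_iff] at h
    refine Prod.ext_iff.mpr ⟨?_, ?_⟩ <;> omega
  have hcardA' : A'.card = A.card := Finset.card_image_of_injOn hgEinj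
  have hA'ne : A'.Nonempty := hA.image _
  obtain ⟨r, m, hr, hm, hrm, hmain⟩ := master A' hA'ne
  refine ⟨r, m, hr, hm, by omega, ?_⟩
  -- ∂A is all odd
  have hodd : ∀ y ∈ A.biUnion nbrs, (y.1 + y.2) % 2 = 1 := by
    intro y hy
    obtain ⟨x, hx, hyx⟩ := Finset.mem_biUnion.1 hy
    have h1 := hpar x hx
    have h2 := (mem_nbrs.1 hyx)
    rw [adjacent_iff] at h2
    omega
  -- image under gO equals corner set
  have himg : (A.biUnion nbrs).image gO = A'.biUnion cornersOf := by
    ext v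
    simp only [Finset.mem_image, Finset.mem_biUnion, hA']
    constructor
    · rintro ⟨y, ⟨x, hx, hyx⟩, rfl⟩
      refine ⟨gE x, ⟨x, hx, rfl⟩, ?_⟩
      have hx2 := hpar x hx
      simp only [nbrs, Finset.mem_insert, Finset.mem_singleton] at hyx
      rcases hyx with h | h | h | h <;>
        (rw [h]; simp only [cornersOf, gO, gE, Finset.mem_insert, Finset.mem_singleton,
          Prod.ext_iff]; omega)
    · rintro ⟨c, ⟨x, hx, rfl⟩, hv⟩
      have hx2 := hpar x hx
      simp only [cornersOf, gE, Finset.mem_insert, Finset.mem_singleton, Prod.ext_iff] at hv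
      rcases hv with ⟨h1, h2⟩ | ⟨h1, h2⟩ | ⟨h1, h2⟩ | ⟨h1, h2⟩
      · exact ⟨(x.1, x.2 - 1), ⟨x, hx, by simp [nbrs]⟩, by
          simp only [gO, Prod.ext_iff]; omega⟩
      · exact ⟨(x.1 + 1, x.2), ⟨x, hx, by simp [nbrs]⟩, by
          simp only [gO, Prod.ext_iff]; omega⟩
      · exact ⟨(x.1 - 1, x.2), ⟨x, hx, by simp [nbrs]⟩, by
          simp only [gO, Prod.ext_iff]; omega⟩
      · exact ⟨(x.1, x.2 + 1), ⟨x, hx, by simp [nbrs]⟩, by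
          simp only [gO, Prod.ext_iff]; omega⟩
  have hinj : ∀ y ∈ A.biUnion nbrs, ∀ z ∈ A.biUnion nbrs, gO y = gO z → y = z := by
    intro y hy z hz h
    have h1 := hodd y hy
    have h2 := hodd z hz
    simp only [gO, Prod.ext_iff] at h
    refine Prod.ext_iff.mpr ⟨?_, ?_⟩ <;> omega
  have : (A.biUnion nbrs).card = (A'.biUnion cornersOf).card := by
    rw [← himg, Finset.card_image_of_injOn hinj]
  omega

lemma boundary_card_par (A : Finset Site) (hA : A.Nonempty) (p : ℤ)
    (hpar : ∀ x ∈ A, (x.1 + x.2) % 2 = p) :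
    ∃ r m : ℕ, 1 ≤ r ∧ 1 ≤ m ∧ A.card ≤ r * m ∧
      A.card + r + m + 1 ≤ (A.biUnion nbrs).card := by
  classical
  by_cases hp : p = 0
  · exact boundary_card_even A hA (fun x hx => by rw [← hp]; exact hpar x hx)
  · -- p must be 1; translate by (1,0)
    have hp1 : p = 1 := by
      obtain ⟨x0, hx0⟩ := hA
      have := hpar x0 hx0; omega
    set τ : Site → Site := fun x => (x.1 + 1, x.2) with hτ
    have hτinj : Function.Injective τ := by
      intro a b h; simp only [hτ, Prod.ext_iff] at h ⊢; omega
    set A2 := A.image τ with hA2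
    have hA2ne : A2.Nonempty := hA.image _
    have hcard2 : A2.card = A.card := Finset.card_image_of_injective _ hτinj
    have hpar2 : ∀ x ∈ A2, (x.1 + x.2) % 2 = 0 := by
      intro x hx
      obtain ⟨a, ha, rfl⟩ := Finset.mem_image.1 hx
      have := hpar a ha
      simp only [hτ]
      omega
    obtain ⟨r, m, hr, hm, hrm, hmain⟩ := boundary_card_even A2 hA2ne hpar2
    have himg : A2.biUnion nbrs = (A.biUnion nbrs).image τ := by
      ext y
      simp only [Finset.mem_biUnion, Finset.mem_image, hA2]
      constructor
      · rintro ⟨x, hx, hyx⟩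
        obtain ⟨a, ha, rfl⟩ := hx
        refine ⟨(y.1 - 1, y.2), ⟨a, ha, ?_⟩, by simp [hτ]⟩
        rw [mem_nbrs, adjacent_iff] at *
        simp only [hτ] at hyx
        omega
      · rintro ⟨z, ⟨a, ha, hz⟩, rfl⟩
        refine ⟨τ a, ⟨a, ha, rfl⟩, ?_⟩
        rw [mem_nbrs, adjacent_iff] at *
        simp only [hτ]
        omega
    have : (A2.biUnion nbrs).card = (A.biUnion nbrs).card := by
      rw [himg, Finset.card_image_of_injective _ hτinj]
    exact ⟨r, m, hr, hm, by omega, by omega⟩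

end S10

namespace S10

lemma four_mul_le_sq {r m k : ℕ} (h : k ≤ r * m) : 4 * k ≤ (r + m) * (r + m) := by
  have h2 : (4 * (k:ℤ)) ≤ ((r:ℤ) + m) * ((r:ℤ) + m) := by
    have hk : (k : ℤ) ≤ (r:ℤ) * m := by exact_mod_cast h
    nlinarith [sq_nonneg ((r:ℤ) - m)]
  exact_mod_cast h2

lemma site_iso (S : Finset Site) (hS : S.Nonempty) :
    ∃ t : ℕ, 4 * S.card ≤ t * t ∧
      S.card + t + 1 ≤ (S.biUnion nbrs \ S).card
        + ((S ×ˢ S).filter (fun p => adjacent p.1 p.2)).card := by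
  classical
  set A := S.filter (fun x => (x.1 + x.2) % 2 = 0) with hAdef
  set B := S.filter (fun x => ¬ (x.1 + x.2) % 2 = 0) with hBdef
  have hAS : A ⊆ S := Finset.filter_subset _ _
  have hBS : B ⊆ S := Finset.filter_subset _ _
  have hABcard : A.card + B.card = S.card := Finset.card_filter_add_card_filter_not _
  have hBpar : ∀ x ∈ B, (x.1 + x.2) % 2 = 1 := by
    intro x hx
    have := (Finset.mem_filter.1 hx).2
    omega
  set N := S.biUnion nbrs \ S with hNdef
  set I := ((S ×ˢ S).filter (fun p => adjacent p.1 p.2)).card with hIdef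
  -- boundary parity facts
  have hbd : ∀ (C : Finset Site) (p : ℤ), (∀ x ∈ C, (x.1 + x.2) % 2 = p) →
      ∀ y ∈ C.biUnion nbrs, ¬ ((y.1 + y.2) % 2 = p) := by
    intro C p hp y hy
    obtain ⟨x, hx, hyx⟩ := Finset.mem_biUnion.1 hy
    have := hp x hx
    have := mem_nbrs.1 hyx
    rw [adjacent_iff] at this
    omega
  by_cases hBne : B.Nonempty
  · by_cases hAne : A.Nonempty
    · -- both parities
      obtain ⟨r1, m1, hr1, hm1, hrm1, hA1⟩ := boundary_card_par A hAne 0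
        (fun x hx => (Finset.mem_filter.1 hx).2)
      obtain ⟨r2, m2, hr2, hm2, hrm2, hB1⟩ := boundary_card_par B hBne 1 hBpar
      set dA := A.biUnion nbrs with hdA
      set dB := B.biUnion nbrs with hdB
      have hdAodd : ∀ y ∈ dA, (y.1 + y.2) % 2 = 1 := by
        intro y hy
        have := hbd A 0 (fun x hx => (Finset.mem_filter.1 hx).2) y hy
        omega
      have hdBev : ∀ y ∈ dB, (y.1 + y.2) % 2 = 0 := by
        intro y hy
        have := hbd B 1 hBpar y hy
        omega
      -- pairs
      set P := (S ×ˢ S).filter (fun p => adjacent p.1 p.2) with hP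
      set PAB := P.filter (fun p => (p.1.1 + p.1.2) % 2 = 0) with hPAB
      set PBA := P.filter (fun p => ¬ (p.1.1 + p.1.2) % 2 = 0) with hPBA
      have hPsum : PAB.card + PBA.card = I := Finset.card_filter_add_card_filter_not _
      -- ∂A ∩ B is controlled by PAB
      have h1 : (dA ∩ B) ⊆ PAB.image Prod.snd := by
        intro b hb
        obtain ⟨hbdA, hbB⟩ := Finset.mem_inter.1 hb
        obtain ⟨a, ha, hba⟩ := Finset.mem_biUnion.1 hbdA
        refine Finset.mem_image.2 ⟨(a, b), ?_, rfl⟩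
        refine Finset.mem_filter.2 ⟨Finset.mem_filter.2 ⟨?_, mem_nbrs.1 hba⟩, ?_⟩
        · exact Finset.mem_product.2 ⟨hAS ha, hBS hbB⟩
        · exact (Finset.mem_filter.1 ha).2
      have h2 : (dB ∩ A) ⊆ PBA.image Prod.snd := by
        intro a ha
        obtain ⟨hadB, haA⟩ := Finset.mem_inter.1 ha
        obtain ⟨b, hb, hab⟩ := Finset.mem_biUnion.1 hadB
        refine Finset.mem_image.2 ⟨(b, a), ?_, rfl⟩
        refine Finset.mem_filter.2 ⟨Finset.mem_filter.2 ⟨?_, mem_nbrs.1 hab⟩, ?_⟩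
        · exact Finset.mem_product.2 ⟨hBS hb, hAS haA⟩
        · show ¬ ((b.1 + b.2) % 2 = 0)
          have := hBpar b hb
          omega
      have hc1 : (dA ∩ B).card ≤ PAB.card :=
        le_trans (Finset.card_le_card h1) (Finset.card_image_le)
      have hc2 : (dB ∩ A).card ≤ PBA.card :=
        le_trans (Finset.card_le_card h2) (Finset.card_image_le)
      -- N contains the two reduced boundaries
      have hsub1 : dA \ B ⊆ N := by
        intro y hy
        obtain ⟨hy1, hy2⟩ := Finset.mem_sdiff.1 hy
        refine Finset.mem_sdiff.2 ⟨?_, ?_⟩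
        · obtain ⟨a, ha, hya⟩ := Finset.mem_biUnion.1 hy1
          exact Finset.mem_biUnion.2 ⟨a, hAS ha, hya⟩
        · intro hyS
          have hodd := hdAodd y hy1
          have : y ∈ B := Finset.mem_filter.2 ⟨hyS, by omega⟩
          exact hy2 this
      have hsub2 : dB \ A ⊆ N := by
        intro y hy
        obtain ⟨hy1, hy2⟩ := Finset.mem_sdiff.1 hy
        refine Finset.mem_sdiff.2 ⟨?_, ?_⟩
        · obtain ⟨b, hb, hyb⟩ := Finset.mem_biUnion.1 hy1
          exact Finset.mem_biUnion.2 ⟨b, hBS hb, hyb⟩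
        · intro hyS
          have hev := hdBev y hy1
          have : y ∈ A := Finset.mem_filter.2 ⟨hyS, by omega⟩
          exact hy2 this
      have hdisj : Disjoint (dA \ B) (dB \ A) := by
        rw [Finset.disjoint_left]
        intro y hy1 hy2
        have := hdAodd y (Finset.mem_sdiff.1 hy1).1
        have := hdBev y (Finset.mem_sdiff.1 hy2).1
        omega
      have hNge : (dA \ B).card + (dB \ A).card ≤ N.card := by
        rw [← Finset.card_union_of_disjoint hdisj]
        exact Finset.card_le_card (Finset.union_subset hsub1 hsub2)
      -- card (dA \ B) ≥ card dA - card (dA ∩ B)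
      have hs1 : dA.card ≤ (dA \ B).card + (dA ∩ B).card := by
        rw [Finset.card_sdiff_add_card_inter]
      have hs2 : dB.card ≤ (dB \ A).card + (dB ∩ A).card := by
        rw [Finset.card_sdiff_add_card_inter]
      refine ⟨r1 + m1 + r2 + m2 + 1, ?_, ?_⟩
      · have h4a : 4 * A.card ≤ (r1 + m1) * (r1 + m1) := four_mul_le_sq hrm1
        have h4b : 4 * B.card ≤ (r2 + m2) * (r2 + m2) := four_mul_le_sq hrm2
        have hexp : (r1 + m1) * (r1 + m1) + (r2 + m2) * (r2 + m2)
            ≤ (r1 + m1 + r2 + m2 + 1) * (r1 + m1 + r2 + m2 + 1) := by nlinarith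
        omega
      · omega
    · -- only odd
      have hSB : S = B := by
        ext x
        constructor
        · intro hx
          by_contra hxB
          have : x ∈ A := by
            rw [hAdef, Finset.mem_filter]
            rw [hBdef, Finset.mem_filter] at hxB
            refine ⟨hx, ?_⟩
            by_contra h
            exact hxB ⟨hx, h⟩
          exact hAne ⟨x, this⟩
        · exact fun hx => hBS hx
      obtain ⟨r, m, hr, hm, hrm, hB1⟩ := boundary_card_par B hBne 1 hBpar
      have hNeq : S.biUnion nbrs \ S = S.biUnion nbrs := by
        apply Finset.sdiff_eq_self_of_disjoint
        rw [Finset.disjoint_left]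
        intro y hy hyS
        have h1 := hbd B 1 hBpar y (by rw [← hSB]; exact hy)
        have h2 := hBpar y (by rw [← hSB]; exact hyS)
        exact h1 h2
      have hScard : S.card = B.card := by rw [hSB]
      refine ⟨r + m, four_mul_le_sq (by omega), ?_⟩
      have : (S.biUnion nbrs).card = (B.biUnion nbrs).card := by rw [hSB]
      have hNcard : N.card = (S.biUnion nbrs).card := by rw [hNdef, hNeq]
      omega
  · -- only even
    have hSA : S = A := by
      ext x
      constructor
      · intro hx
        by_contra hxA
        have : x ∈ B := by
          rw [hBdef, Finset.mem_filter]
          rw [hAdef, Finset.mem_filter] at hxA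
          refine ⟨hx, ?_⟩
          intro h
          exact hxA ⟨hx, h⟩
        exact hBne ⟨x, this⟩
      · exact fun hx => hAS hx
    have hAne : A.Nonempty := hSA ▸ hS
    obtain ⟨r, m, hr, hm, hrm, hA1⟩ := boundary_card_par A hAne 0
      (fun x hx => (Finset.mem_filter.1 hx).2)
    have hNeq : S.biUnion nbrs \ S = S.biUnion nbrs := by
      apply Finset.sdiff_eq_self_of_disjoint
      rw [Finset.disjoint_left]
      intro y hy hyS
      have h1 := hbd A 0 (fun x hx => (Finset.mem_filter.1 hx).2) y (by rw [← hSA]; exact hy)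
      have hyA : y ∈ A := by rw [← hSA]; exact hyS
      have h2 : (y.1 + y.2) % 2 = 0 := (Finset.mem_filter.1 hyA).2
      exact h1 h2
    have hScard : S.card = A.card := by rw [hSA]
    refine ⟨r + m, four_mul_le_sq (by omega), ?_⟩
    have : (S.biUnion nbrs).card = (A.biUnion nbrs).card := by rw [hSA]
    have hNcard : N.card = (S.biUnion nbrs).card := by rw [hNdef, hNeq]
    omega

end S10

namespace S10

def wParam (k : ℕ) : ℕ :=
  if k ≤ Nat.sqrt k * Nat.sqrt k + Nat.sqrt k then Nat.sqrt k else Nat.sqrt k + 1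

def sParam (k : ℕ) : ℕ := k / wParam k + wParam k + (if k % wParam k = 0 then 0 else 1)

lemma helper1 (l k : ℕ) (h1 : 1 ≤ l) (h2 : l * l ≤ k) :
    (2 * l - 1) * (2 * l - 1) < 4 * k := by
  obtain ⟨j, rfl⟩ : ∃ j, l = j + 1 := ⟨l - 1, by omega⟩
  have e1 : 2 * (j + 1) - 1 = 2 * j + 1 := by omega
  rw [e1]
  have e2 : (2 * j + 1) * (2 * j + 1) = 4 * (j * j) + 4 * j + 1 := by ring
  have e3 : (j + 1) * (j + 1) = j * j + 2 * j + 1 := by ring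
  omega

lemma sParam_spec (k : ℕ) (hk : 1 ≤ k) :
    (sParam k - 1) * (sParam k - 1) < 4 * k ∧ 2 ≤ sParam k := by
  obtain ⟨hl1, hl2, hl3⟩ := sqrt_facts k hk
  set l := Nat.sqrt k with hl
  have hexp1 : (l + 1) * (l + 1) = l * l + 2 * l + 1 := by ring
  rw [hexp1] at hl3
  by_cases hw : k ≤ l * l + l
  · have hwv : wParam k = l := by unfold wParam; rw [← hl]; simp [hw]
    have hdm : l * (k / l) + k % l = k := Nat.div_add_mod k l
    have hq1 : l ≤ k / l := (Nat.le_div_iff_mul_le (by omega)).2 (by omega)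
    have hq2 : k / l ≤ l + 1 := by
      have hlt : k / l < l + 2 := by
        rw [Nat.div_lt_iff_lt_mul (by omega)]
        have he2 : (l + 2) * l = l * l + 2 * l := by ring
        omega
      omega
    have hrem : k % l < l := Nat.mod_lt _ (by omega)
    rcases Nat.eq_or_lt_of_le hq2 with hq | hq
    · -- q = l + 1, rem = 0, k = l*l + l
      have hlq : l * (k / l) = l * l + l := by rw [hq]; ring
      have hrem0 : k % l = 0 := by omega
      have hs : sParam k = 2 * l + 1 := by
        unfold sParam
        rw [hwv, hq, hrem0, if_pos rfl]
        omega
      have he : (2 * l) * (2 * l) = 4 * (l * l) := by ring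
      rw [hs]
      have h2 : 2 * l + 1 - 1 = 2 * l := by omega
      rw [h2, he]
      omega
    · -- q = l
      have hqv : k / l = l := by omega
      have hlq : l * (k / l) = l * l := by rw [hqv]
      by_cases hr : k % l = 0
      · have hs : sParam k = 2 * l := by
          unfold sParam
          rw [hwv, hqv, hr, if_pos rfl]
          omega
        rw [hs]
        constructor
        · exact helper1 l k (by omega) (by omega)
        · omega
      · have hs : sParam k = 2 * l + 1 := by
          unfold sParam
          rw [hwv, hqv, if_neg hr]
          omega
        rw [hs]
        have h2 : 2 * l + 1 - 1 = 2 * l := by omega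
        have he : (2 * l) * (2 * l) = 4 * (l * l) := by ring
        rw [h2, he]
        omega
  · -- w = l + 1
    have hwv : wParam k = l + 1 := by unfold wParam; rw [← hl]; simp [hw]
    have hdm : (l + 1) * (k / (l + 1)) + k % (l + 1) = k := Nat.div_add_mod k (l + 1)
    have hq1 : l ≤ k / (l + 1) := by
      rw [Nat.le_div_iff_mul_le (by omega)]
      have he2 : l * (l + 1) = l * l + l := by ring
      omega
    have hq2 : k / (l + 1) < l + 1 := by
      rw [Nat.div_lt_iff_lt_mul (by omega)]
      have he2 : (l + 1) * (l + 1) = l * l + 2 * l + 1 := by ring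
      omega
    have hqv : k / (l + 1) = l := by omega
    have hlq : (l + 1) * (k / (l + 1)) = l * l + l := by rw [hqv]; ring
    have hrem : ¬ k % (l + 1) = 0 := by omega
    have hs : sParam k = 2 * l + 2 := by
      unfold sParam
      rw [hwv, hqv, if_neg hrem]
      omega
    have he : (2 * l + 1) * (2 * l + 1) = 4 * (l * l) + 4 * l + 1 := by ring
    rw [hs]
    have h2 : 2 * l + 2 - 1 = 2 * l + 1 := by omega
    rw [h2, he]
    omega

lemma sParam_le (k t : ℕ) (hk : 1 ≤ k) (ht : 4 * k ≤ t * t) : sParam k ≤ t := by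
  obtain ⟨h1, h2⟩ := sParam_spec k hk
  by_contra h
  have h3 : t ≤ sParam k - 1 := by omega
  have : t * t ≤ (sParam k - 1) * (sParam k - 1) := Nat.mul_le_mul h3 h3
  omega

end S10

namespace S10

lemma competitor (L k : ℕ) (hk1 : 1 ≤ k) (hkL : k ≤ L ^ 2) :
    ∃ ξ : Config (latBox L), numType2 ξ = k ∧
      (∀ x, ξ.val x = 2 → x ∈ inner2 (latBox L)) ∧
      4 * k ≤ numBonds ξ ∧ numType1 ξ ≤ k + sParam k + 1 := by
  classical
  obtain ⟨hl1, hl2, hl3⟩ := sqrt_facts k hk1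
  set l := Nat.sqrt k with hldef
  have hL2 : L ^ 2 = L * L := by ring
  rw [hL2] at hkL
  have hlL : l ≤ L := by
    by_contra h
    have h1 : L + 1 ≤ l := by omega
    have h2 : (L + 1) * (L + 1) ≤ l * l := Nat.mul_le_mul h1 h1
    have h3 : (L + 1) * (L + 1) = L * L + 2 * L + 1 := by ring
    omega
  set w := wParam k with hwdef
  have hwcases : (w = l ∧ k ≤ l * l + l) ∨ (w = l + 1 ∧ l * l + l < k) := by
    rw [hwdef]
    unfold wParam
    rw [← hldef]
    by_cases hc : k ≤ l * l + l
    · exact Or.inl ⟨by rw [if_pos hc], hc⟩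
    · exact Or.inr ⟨by rw [if_neg hc], by omega⟩
  have hw1 : 1 ≤ w := by rcases hwcases with ⟨h, _⟩ | ⟨h, _⟩ <;> omega
  have hwL : w ≤ L := by
    rcases hwcases with ⟨hw, hc⟩ | ⟨hw, hc⟩
    · omega
    · by_contra h
      have h1 : L ≤ l := by omega
      have h2 : L * L ≤ l * l := Nat.mul_le_mul h1 h1
      omega
  have hkLw : k ≤ L * w := by
    rcases hwcases with ⟨hw, hc⟩ | ⟨hw, hc⟩
    · by_cases hc2 : l = L
      · have : L * L ≤ k := by rw [← hc2]; exact hl2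
        have : k = L * L := by omega
        rw [this, hw, hc2]
      · have h1 : k ≤ l * (l + 1) := by
          have he : l * (l + 1) = l * l + l := by ring
          omega
        have h2 : l * (l + 1) ≤ l * L := Nat.mul_le_mul_left l (by omega)
        have h3 : l * L ≤ L * w := by rw [hw, Nat.mul_comm]
        omega
    · have hlL2 : l + 1 ≤ L := by
        by_contra h
        have h1 : L ≤ l := by omega
        have h2 : L * L ≤ l * l := Nat.mul_le_mul h1 h1
        omega
      have h1 : (l + 1) * (l + 1) ≤ (l + 1) * L := Nat.mul_le_mul_left (l + 1) hlL2
      have h2 : (l + 1) * L = L * w := by rw [hw, Nat.mul_comm]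
      omega
  set q := k / w with hqdef
  set rem := k % w with hremdef
  have hdm : w * q + rem = k := Nat.div_add_mod k w
  have hrw : rem < w := Nat.mod_lt _ (by omega)
  -- the configuration
  set p1 : ℤ := 1 - (L : ℤ) with hp1
  set f : ℕ → Site := fun t => (p1 + (t % w : ℕ) + (t / w : ℕ), ((t / w : ℕ) : ℤ) - (t % w : ℕ))
    with hf
  set S2 : Finset Site := (Finset.range k).image f with hS2
  -- basic index bounds
  have hidx : ∀ t < k, t % w < w ∧ t / w < L := by
    intro t ht
    refine ⟨Nat.mod_lt _ (by omega), ?_⟩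
    rw [Nat.div_lt_iff_lt_mul (by omega)]
    calc t < k := ht
      _ ≤ L * w := hkLw
  have hgen : ∀ i j : ℕ, i < w → j < L →
      ((p1 + (i : ℤ) + (j : ℤ), ((j : ℕ) : ℤ) - (i : ℕ)) : Site) ∈ inner2 (latBox L) := by
    intro i j hi hj
    rw [mem_inner2]
    simp only [hp1]
    constructor <;> omega
  have hS2sub : ∀ x ∈ S2, x ∈ inner2 (latBox L) := by
    intro x hx
    obtain ⟨t, ht, rfl⟩ := Finset.mem_image.1 hx
    rw [Finset.mem_range] at ht
    obtain ⟨hi, hj⟩ := hidx t ht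
    exact hgen (t % w) (t / w) (by omega) (by omega)
  have hS2par : ∀ x ∈ S2, ((x.1 + x.2) % 2 : ℤ) = (1 - (L : ℤ)) % 2 := by
    intro x hx
    obtain ⟨t, _, rfl⟩ := Finset.mem_image.1 hx
    simp only [hf, hp1]
    omega
  have hS2card : S2.card = k := by
    rw [hS2, Finset.card_image_of_injOn, Finset.card_range]
    intro t ht t' ht' hfe
    rw [Finset.coe_range, Set.mem_Iio] at ht ht'
    simp only [hf, Prod.ext_iff, hp1] at hfe
    have e1 : t % w = t' % w := by omega
    have e2 : t / w = t' / w := by omega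
    have d1 : w * (t / w) + t % w = t := Nat.div_add_mod t w
    have d2 : w * (t' / w) + t' % w = t' := Nat.div_add_mod t' w
    have : w * (t / w) = w * (t' / w) := by rw [e2]
    omega
  set border : Finset Site := S2.biUnion nbrs \ S2 with hborder
  have hborder_inner1 : ∀ y ∈ border, y ∈ inner1 (latBox L) := by
    intro y hy
    obtain ⟨x, hx, hyx⟩ := Finset.mem_biUnion.1 (Finset.mem_sdiff.1 hy).1
    exact nbrs_inner2 (hS2sub x hx) hyx
  have hS2Λ : ∀ x ∈ S2, x ∈ latBox L :=
    fun x hx => inner1_subset_latBox (inner2_subset_inner1 (hS2sub x hx))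
  have hborderΛ : ∀ y ∈ border, y ∈ latBox L :=
    fun y hy => inner1_subset_latBox (hborder_inner1 y hy)
  -- the configuration
  have hval : ∀ x, x ∉ latBox L → (if x ∈ S2 then (2 : Fin 3) else if x ∈ border then 1 else 0) = 0 := by
    intro x hx
    rw [if_neg (fun h => hx (hS2Λ x h)), if_neg (fun h => hx (hborderΛ x h))]
  refine ⟨⟨fun x => if x ∈ S2 then 2 else if x ∈ border then 1 else 0, hval⟩, ?_, ?_, ?_, ?_⟩
  · -- numType2 = k
    unfold numType2
    rw [← hS2card]
    congr 1
    ext x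
    rw [Finset.mem_filter]
    constructor
    · rintro ⟨hxΛ, hx2⟩
      simp only [] at hx2
      by_cases h1 : x ∈ S2
      · exact h1
      · rw [if_neg h1] at hx2
        by_cases h2 : x ∈ border
        · rw [if_pos h2] at hx2
          exact absurd hx2 (by decide)
        · rw [if_neg h2] at hx2
          exact absurd hx2 (by decide)
    · intro hx
      exact ⟨hS2Λ x hx, by simp only [if_pos hx]⟩
  · -- type 2 sites in inner2
    intro x hx2
    simp only [] at hx2
    by_cases h1 : x ∈ S2
    · exact hS2sub x h1
    · rw [if_neg h1] at hx2
      by_cases h2 : x ∈ border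
      · rw [if_pos h2] at hx2
        exact absurd hx2 (by decide)
      · rw [if_neg h2] at hx2
        exact absurd hx2 (by decide)
  · -- bonds ≥ 4k
    have hsubT : pairT S2 ⊆ (inner1 (latBox L) ×ˢ inner1 (latBox L)).filter
        (fun pr => adjacent pr.1 pr.2 ∧
          (if pr.1 ∈ S2 then (2:Fin 3) else if pr.1 ∈ border then 1 else 0) = 1 ∧
          (if pr.2 ∈ S2 then (2:Fin 3) else if pr.2 ∈ border then 1 else 0) = 2) := by
      intro pr hpr
      obtain ⟨h2, h1⟩ := mem_pairT.1 hpr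
      have hx2 : pr.2 ∈ inner2 (latBox L) := hS2sub _ h2
      have hy1 : pr.1 ∈ inner1 (latBox L) := nbrs_inner2 hx2 h1
      have hadj : adjacent pr.2 pr.1 := mem_nbrs.1 h1
      have hnot : pr.1 ∉ S2 := by
        intro hmem
        have hp1 := hS2par _ hmem
        have hp2 := hS2par _ h2
        rw [adjacent_iff] at hadj
        omega
      have hbord : pr.1 ∈ border := by
        rw [hborder, Finset.mem_sdiff]
        exact ⟨Finset.mem_biUnion.2 ⟨pr.2, h2, h1⟩, hnot⟩
      rw [Finset.mem_filter, Finset.mem_product]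
      refine ⟨⟨hy1, inner2_subset_inner1 hx2⟩, adjacent_symm hadj, ?_, ?_⟩
      · rw [if_neg hnot, if_pos hbord]
      · rw [if_pos h2]
    calc 4 * k = (pairT S2).card := by rw [card_pairT, hS2card]
      _ ≤ _ := Finset.card_le_card hsubT
  · -- numType1 ≤ k + s + 1
    have hfilter : (latBox L).filter
        (fun x => (if x ∈ S2 then (2:Fin 3) else if x ∈ border then 1 else 0) = 1) = border := by
      ext x
      rw [Finset.mem_filter]
      constructor
      · rintro ⟨hxΛ, hx1⟩
        by_cases h1 : x ∈ S2
        · rw [if_pos h1] at hx1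
          exact absurd hx1 (by decide)
        · rw [if_neg h1] at hx1
          by_cases h2 : x ∈ border
          · exact h2
          · rw [if_neg h2] at hx1
            exact absurd hx1 (by decide)
      · intro hx
        have h1 : x ∉ S2 := (Finset.mem_sdiff.1 hx).2
        exact ⟨hborderΛ x hx, by rw [if_neg h1, if_pos hx]⟩
    unfold numType1
    rw [hfilter]
    -- border is contained in the corner image
    set cornerSite : ℕ × ℕ → Site :=
      fun ab => (p1 + (ab.1 : ℤ) + ab.2 - 1, ((ab.2 : ℤ)) - ab.1) with hcs
    set C : Finset (ℕ × ℕ) := (Finset.range (w + 1) ×ˢ Finset.range (q + 1))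
      ∪ (if rem = 0 then ∅ else (Finset.range (rem + 1)) ×ˢ {q + 1}) with hC
    have hsubC : border ⊆ C.image cornerSite := by
      intro y hy
      obtain ⟨x, hx, hyx⟩ := Finset.mem_biUnion.1 (Finset.mem_sdiff.1 hy).1
      obtain ⟨t, ht, rfl⟩ := Finset.mem_image.1 hx
      rw [Finset.mem_range] at ht
      obtain ⟨hi, hjL⟩ := hidx t ht
      have hdmt : w * (t / w) + t % w = t := Nat.div_add_mod t w
      have hjq : t / w ≤ q := by
        have : t / w < q + 1 := by
          rw [Nat.div_lt_iff_lt_mul (by omega)]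
          have : (q + 1) * w = w * q + w := by ring
          omega
        omega
      have hbar : t / w = q → t % w < rem := by
        intro hj
        rw [hj] at hdmt
        omega
      simp only [nbrs, hf, Finset.mem_insert, Finset.mem_singleton] at hyx
      have hmemC : ∀ a b : ℕ, a ≤ w → b ≤ q + 1 → (b = q + 1 → a ≤ rem ∧ rem ≠ 0) →
          (a, b) ∈ C := by
        intro a b ha hb hbar2
        rw [hC, Finset.mem_union]
        by_cases hbq : b = q + 1
        · obtain ⟨ha2, hr0⟩ := hbar2 hbq
          right
          rw [if_neg hr0, Finset.mem_product, Finset.mem_range, Finset.mem_singleton]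
          exact ⟨by omega, hbq⟩
        · left
          rw [Finset.mem_product, Finset.mem_range, Finset.mem_range]
          exact ⟨by omega, by omega⟩
      rcases hyx with h | h | h | h
      · -- y = f t + (1,0) : corner (i+1, j+1)
        refine Finset.mem_image.2 ⟨(t % w + 1, t / w + 1), hmemC _ _ (by omega) (by omega)
          (fun hb => ⟨by have := hbar (by omega); omega, by omega⟩), ?_⟩
        rw [h]
        all_goals (simp only [hcs, Prod.ext_iff]; constructor <;> (push_cast; ring))
      · -- y = f t - (1,0) : corner (i, j)
        refine Finset.mem_image.2 ⟨(t % w, t / w), hmemC _ _ (by omega) (by omega)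
          (by omega), ?_⟩
        rw [h]
        all_goals (simp only [hcs, Prod.ext_iff]; constructor <;> (push_cast; ring))
      · -- y = f t + (0,1) : corner (i, j+1)
        refine Finset.mem_image.2 ⟨(t % w, t / w + 1), hmemC _ _ (by omega) (by omega)
          (fun hb => ⟨by have := hbar (by omega); omega, by omega⟩), ?_⟩
        rw [h]
        all_goals (simp only [hcs, Prod.ext_iff]; constructor <;> (push_cast; ring))
      · -- y = f t - (0,1) : corner (i+1, j)
        refine Finset.mem_image.2 ⟨(t % w + 1, t / w), hmemC _ _ (by omega) (by omega)
          (by omega), ?_⟩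
        rw [h]
        all_goals (simp only [hcs, Prod.ext_iff]; constructor <;> (push_cast; ring))
    have hCcard : C.card ≤ k + sParam k + 1 := by
      have hs : sParam k = q + w + (if rem = 0 then 0 else 1) := by
        unfold sParam
        rw [← hwdef, ← hqdef, ← hremdef]
      have h1 : C.card ≤ (w + 1) * (q + 1) + (if rem = 0 then 0 else rem + 1) := by
        rw [hC]
        refine le_trans (Finset.card_union_le _ _) ?_
        apply add_le_add
        · rw [Finset.card_product, Finset.card_range, Finset.card_range]
        · by_cases hr : rem = 0
          · rw [if_pos hr, if_pos hr]
            simp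
          · rw [if_neg hr, if_neg hr, Finset.card_product, Finset.card_range,
              Finset.card_singleton]
            omega
      have h2 : (w + 1) * (q + 1) = w * q + w + q + 1 := by ring
      rw [hs]
      by_cases hr : rem = 0
      · rw [if_pos hr] at h1 ⊢
        omega
      · rw [if_neg hr] at h1 ⊢
        omega
    calc border.card ≤ (C.image cornerSite).card := Finset.card_le_card hsubC
      _ ≤ C.card := Finset.card_image_le
      _ ≤ k + sParam k + 1 := hCcard

end S10

set_option maxHeartbeats 1000000 in
open S10 in
/-- every minimizer of H over V_{*,n₂} (n₂ ≤ L²) is tb-tiled, i.e.,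
belongs to V_{*,n₂}^{4n₂}. -/
theorem minimal_energy_configurations_are_tb_tiled
    (U Δ1 Δ2 : ℝ) (hU : 0 < U) (hΔ1 : 0 < Δ1) (hΔ1U : Δ1 < U)
    (hgap : 2 * U < Δ2 - Δ1) (hsum : Δ1 + Δ2 < 4 * U)
    (L : ℕ) (hL : 2 * lstar U Δ1 Δ2 < (L : ℤ))
    (k : ℕ) (hk : k ≤ L ^ 2)
    (η : Config (latBox L)) (hη : η ∈ VStar (latBox L) k)
    (hmin : ∀ ξ ∈ VStar (latBox L) k, energy U Δ1 Δ2 η ≤ energy U Δ1 Δ2 ξ) :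
    η ∈ VTiled (latBox L) k := by
  classical
  obtain ⟨hk2, hin2⟩ := hη
  have fin3 : ∀ v : Fin 3, v ≠ 0 → v ≠ 2 → v = 1 := by decide
  -- Step A1 : in a minimizer, every particle of type 1 has a neighbouring type 2
  have hA1 : ∀ x, η.val x = 1 → ∃ y ∈ nbrs x, η.val y = 2 := by
    intro x hx1
    by_contra hno
    push_neg at hno
    have hxΛ : x ∈ latBox L := by
      by_contra hx
      rw [η.zero_outside x hx] at hx1
      exact absurd hx1 (by decide)
    have hout : ∀ z, z ∉ latBox L → Function.update η.val x 0 z = 0 := by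
      intro z hz
      rw [Function.update_apply]
      split
      · rfl
      · exact η.zero_outside z hz
    set ξ : Config (latBox L) := ⟨Function.update η.val x 0, hout⟩ with hξdef
    have hvam : ∀ z, z ≠ x → ξ.val z = η.val z := fun z hz => Function.update_of_ne hz _ _
    have hvax : ξ.val x = 0 := Function.update_self _ _ _
    have hn2 : numType2 ξ = numType2 η := by
      unfold numType2
      apply Finset.card_bij (fun z _ => z) ?_ ?_ ?_ <;> intro z hz
      · rw [Finset.mem_filter] at *
        refine ⟨hz.1, ?_⟩
        have h2 := hz.2
        by_cases hzx : z = x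
        · subst hzx; rw [hvax] at h2; exact absurd h2 (by decide)
        · rw [← hvam z hzx]; exact h2
      · intro z' hz' h; exact h
      · rw [Finset.mem_filter] at hz
        refine ⟨z, Finset.mem_filter.2 ⟨hz.1, ?_⟩, rfl⟩
        have h2 := hz.2
        by_cases hzx : z = x
        · subst hzx; rw [hx1] at h2; exact absurd h2 (by decide)
        · rw [hvam z hzx]; exact h2
    have hVS : ξ ∈ VStar (latBox L) k := by
      refine ⟨hn2.trans hk2, ?_⟩
      intro z hz2
      by_cases hzx : z = x
      · subst hzx; rw [hvax] at hz2; exact absurd hz2 (by decide)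
      · rw [hvam z hzx] at hz2; exact hin2 z hz2
    have hB : numBonds ξ = numBonds η := by
      unfold numBonds
      congr 1
      apply Finset.filter_congr
      intro pr hpr
      constructor
      · rintro ⟨hadj, h1, h2⟩
        have h1x : pr.1 ≠ x := by
          intro he; rw [he, hvax] at h1; exact absurd h1 (by decide)
        have h2x : pr.2 ≠ x := by
          intro he; rw [he, hvax] at h2; exact absurd h2 (by decide)
        rw [hvam _ h1x] at h1
        rw [hvam _ h2x] at h2
        exact ⟨hadj, h1, h2⟩
      · rintro ⟨hadj, h1, h2⟩
        have h2x : pr.2 ≠ x := by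
          intro he; rw [he, hx1] at h2; exact absurd h2 (by decide)
        have h1x : pr.1 ≠ x := by
          intro he
          rw [he] at hadj
          exact absurd h2 (hno pr.2 (mem_nbrs.2 hadj))
        rw [← hvam _ h1x] at h1
        rw [← hvam _ h2x] at h2
        exact ⟨hadj, h1, h2⟩
    have hn1 : numType1 η = numType1 ξ + 1 := by
      unfold numType1
      have he : (latBox L).filter (fun z => ξ.val z = 1)
          = ((latBox L).filter (fun z => η.val z = 1)).erase x := by
        ext z
        rw [Finset.mem_erase, Finset.mem_filter, Finset.mem_filter]
        by_cases hz : z = x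
        · subst hz
          constructor
          · rintro ⟨_, h⟩; rw [hvax] at h; exact absurd h (by decide)
          · rintro ⟨h, _⟩; exact absurd rfl h
        · rw [hvam z hz]
          exact ⟨fun ⟨h1, h2⟩ => ⟨hz, h1, h2⟩, fun ⟨_, h1, h2⟩ => ⟨h1, h2⟩⟩
      have hmem : x ∈ (latBox L).filter (fun z => η.val z = 1) :=
        Finset.mem_filter.2 ⟨hxΛ, hx1⟩
      rw [he, Finset.card_erase_of_mem hmem]
      have : 0 < ((latBox L).filter (fun z => η.val z = 1)).card :=
        Finset.card_pos.2 ⟨x, hmem⟩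
      omega
    have hmin2 := hmin ξ hVS
    unfold energy at hmin2
    rw [hB, hn2, hn1] at hmin2
    push_cast at hmin2
    linarith
  -- Step A2 : in a minimizer, every neighbour of a particle of type 2 is occupied
  have hA2 : ∀ x, η.val x = 2 → ∀ y ∈ nbrs x, η.val y ≠ 0 := by
    intro x hx2 y hy hy0
    have hxin : x ∈ inner2 (latBox L) := hin2 x hx2
    have hyin : y ∈ inner1 (latBox L) := nbrs_inner2 hxin hy
    have hyΛ : y ∈ latBox L := inner1_subset_latBox hyin
    have hyx : y ≠ x := by
      intro he; rw [he, hx2] at hy0; exact absurd hy0 (by decide)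
    have hout : ∀ z, z ∉ latBox L → Function.update η.val y 1 z = 0 := by
      intro z hz
      rw [Function.update_apply]
      split
      · exact absurd (by assumption : z = y) (fun h => hz (h ▸ hyΛ))
      · exact η.zero_outside z hz
    set ξ : Config (latBox L) := ⟨Function.update η.val y 1, hout⟩ with hξdef
    have hvam : ∀ z, z ≠ y → ξ.val z = η.val z := fun z hz => Function.update_of_ne hz _ _
    have hvay : ξ.val y = 1 := Function.update_self _ _ _
    have hn2 : numType2 ξ = numType2 η := by
      unfold numType2
      congr 1
      apply Finset.filter_congr
      intro z hzΛ
      by_cases hz : z = y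
      · subst hz
        rw [hvay, hy0]
        exact iff_of_false (by decide) (by decide)
      · rw [hvam z hz]
    have hVS : ξ ∈ VStar (latBox L) k := by
      refine ⟨hn2.trans hk2, ?_⟩
      intro z hz2
      by_cases hz : z = y
      · subst hz; rw [hvay] at hz2; exact absurd hz2 (by decide)
      · rw [hvam z hz] at hz2; exact hin2 z hz2
    have hn1 : numType1 ξ = numType1 η + 1 := by
      unfold numType1
      have he : (latBox L).filter (fun z => ξ.val z = 1)
          = insert y ((latBox L).filter (fun z => η.val z = 1)) := by
        ext z
        rw [Finset.mem_insert, Finset.mem_filter, Finset.mem_filter]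
        by_cases hz : z = y
        · subst hz
          exact iff_of_true ⟨hyΛ, hvay⟩ (Or.inl rfl)
        · rw [hvam z hz]
          constructor
          · rintro ⟨h1, h2⟩; exact Or.inr ⟨h1, h2⟩
          · rintro (h | ⟨h1, h2⟩)
            · exact absurd h hz
            · exact ⟨h1, h2⟩
      rw [he, Finset.card_insert_of_notMem]
      intro hmem
      rw [Finset.mem_filter] at hmem
      rw [hmem.2] at hy0
      exact absurd hy0 (by decide)
    have hBond : numBonds η + 1 ≤ numBonds ξ := by
      unfold numBonds
      have hyxpair : ((y, x) : Site × Site) ∉ (inner1 (latBox L) ×ˢ inner1 (latBox L)).filter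
          (fun pr => adjacent pr.1 pr.2 ∧ η.val pr.1 = 1 ∧ η.val pr.2 = 2) := by
        intro hmem
        rw [Finset.mem_filter] at hmem
        have := hmem.2.2.1
        rw [hy0] at this
        exact absurd this (by decide)
      have hsub : insert ((y, x) : Site × Site)
          ((inner1 (latBox L) ×ˢ inner1 (latBox L)).filter
            (fun pr => adjacent pr.1 pr.2 ∧ η.val pr.1 = 1 ∧ η.val pr.2 = 2))
          ⊆ (inner1 (latBox L) ×ˢ inner1 (latBox L)).filter
            (fun pr => adjacent pr.1 pr.2 ∧ ξ.val pr.1 = 1 ∧ ξ.val pr.2 = 2) := by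
        intro pr hpr
        rcases Finset.mem_insert.1 hpr with rfl | hpr
        · rw [Finset.mem_filter, Finset.mem_product]
          refine ⟨⟨hyin, inner2_subset_inner1 hxin⟩,
            adjacent_symm (mem_nbrs.1 hy), hvay, ?_⟩
          rw [hvam x (fun h => hyx h.symm)]
          exact hx2
        · rw [Finset.mem_filter] at hpr ⊢
          obtain ⟨hprod, hadj, h1, h2⟩ := hpr
          have h1y : pr.1 ≠ y := by
            intro he; rw [he, hy0] at h1; exact absurd h1 (by decide)
          have h2y : pr.2 ≠ y := by
            intro he; rw [he, hy0] at h2; exact absurd h2 (by decide)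
          rw [← hvam _ h1y] at h1
          rw [← hvam _ h2y] at h2
          exact ⟨hprod, hadj, h1, h2⟩
      calc _ + 1 = (insert ((y, x) : Site × Site)
            ((inner1 (latBox L) ×ˢ inner1 (latBox L)).filter
              (fun pr => adjacent pr.1 pr.2 ∧ η.val pr.1 = 1 ∧ η.val pr.2 = 2))).card := by
            rw [Finset.card_insert_of_notMem hyxpair]
        _ ≤ _ := Finset.card_le_card hsub
    have hmin2 := hmin ξ hVS
    unfold energy at hmin2
    rw [hn2, hn1] at hmin2
    have hc : (numBonds η : ℝ) + 1 ≤ (numBonds ξ : ℝ) := by exact_mod_cast hBond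
    push_cast at hmin2
    nlinarith
  -- the set of particles of type 2
  set S : Finset Site := (latBox L).filter (fun z => η.val z = 2) with hSdef
  have hcardS : S.card = k := hk2
  have hSin2 : ∀ x ∈ S, x ∈ inner2 (latBox L) := by
    intro x hx
    exact hin2 x (Finset.mem_filter.1 hx).2
  have hSval : ∀ x ∈ S, η.val x = 2 := fun x hx => (Finset.mem_filter.1 hx).2
  have hmemS : ∀ x, η.val x = 2 → x ∈ S := by
    intro x hx
    have hxΛ : x ∈ latBox L := by
      by_contra h
      rw [η.zero_outside x h] at hx
      exact absurd hx (by decide)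
    exact Finset.mem_filter.2 ⟨hxΛ, hx⟩
  set BF : Finset (Site × Site) := (inner1 (latBox L) ×ˢ inner1 (latBox L)).filter
    (fun pr => adjacent pr.1 pr.2 ∧ η.val pr.1 = 1 ∧ η.val pr.2 = 2) with hBFdef
  have hBFnum : numBonds η = BF.card := rfl
  have hBFsub : BF ⊆ pairT S := by
    intro pr hpr
    rw [Finset.mem_filter, Finset.mem_product] at hpr
    obtain ⟨⟨hp1, hp2⟩, hadj, h1, h2⟩ := hpr
    exact mem_pairT.2 ⟨hmemS _ h2, mem_nbrs.2 (adjacent_symm hadj)⟩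
  by_cases hadjex : ∃ x0 ∈ S, ∃ y0 ∈ S, adjacent x0 y0
  · -- impossible for a minimizer : derive a contradiction
    exfalso
    obtain ⟨x0, hx0, y0, hy0, hadj0⟩ := hadjex
    have hk1 : 1 ≤ k := by
      rw [← hcardS]
      exact Finset.card_pos.2 ⟨x0, hx0⟩
    set P : Finset (Site × Site) := (S ×ˢ S).filter (fun pr => adjacent pr.1 pr.2) with hPdef
    have hPsub : P ⊆ pairT S := by
      intro pr hpr
      rw [Finset.mem_filter, Finset.mem_product] at hpr
      exact mem_pairT.2 ⟨hpr.1.2, mem_nbrs.2 (adjacent_symm hpr.2)⟩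
    have hdisj : Disjoint BF P := by
      rw [Finset.disjoint_left]
      intro pr hpr hpr'
      rw [Finset.mem_filter] at hpr
      rw [Finset.mem_filter, Finset.mem_product] at hpr'
      have h1 := hpr.2.2.1
      have h2 := hSval _ hpr'.1.1
      rw [h1] at h2
      exact absurd h2 (by decide)
    have hBI : numBonds η + P.card ≤ 4 * k := by
      rw [hBFnum, ← hcardS, ← card_pairT S, ← Finset.card_union_of_disjoint hdisj]
      exact Finset.card_le_card (Finset.union_subset hBFsub hPsub)
    have hI2 : 2 ≤ P.card := by
      have hne : x0 ≠ y0 := adjacent_ne hadj0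
      have hsub2 : {((x0, y0) : Site × Site), ((y0, x0) : Site × Site)} ⊆ P := by
        intro pr hpr
        rcases Finset.mem_insert.1 hpr with rfl | hpr
        · exact Finset.mem_filter.2 ⟨Finset.mem_product.2 ⟨hx0, hy0⟩, hadj0⟩
        · rw [Finset.mem_singleton] at hpr
          subst hpr
          exact Finset.mem_filter.2 ⟨Finset.mem_product.2 ⟨hy0, hx0⟩, adjacent_symm hadj0⟩
      calc 2 = ({((x0, y0) : Site × Site), ((y0, x0) : Site × Site)} : Finset _).card := by
            rw [Finset.card_insert_of_notMem (by
              rw [Finset.mem_singleton]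
              intro h
              exact hne (Prod.ext_iff.1 h).1), Finset.card_singleton]
        _ ≤ P.card := Finset.card_le_card hsub2
    -- isoperimetric bound
    obtain ⟨t, ht4, htiso⟩ := site_iso S ⟨x0, hx0⟩
    have hst : sParam k ≤ t := by
      apply sParam_le k t hk1
      rw [← hcardS]
      exact ht4
    have hNble : ∀ z ∈ S.biUnion nbrs \ S, η.val z = 1 := by
      intro z hz
      rw [Finset.mem_sdiff] at hz
      obtain ⟨x, hx, hzx⟩ := Finset.mem_biUnion.1 hz.1
      have h0 : η.val z ≠ 0 := hA2 x (hSval x hx) z hzx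
      have h2 : η.val z ≠ 2 := fun h => hz.2 (hmemS z h)
      exact fin3 _ h0 h2
    have hNn1 : (S.biUnion nbrs \ S).card ≤ numType1 η := by
      unfold numType1
      apply Finset.card_le_card
      intro z hz
      have h1 := hNble z hz
      rw [Finset.mem_sdiff] at hz
      obtain ⟨x, hx, hzx⟩ := Finset.mem_biUnion.1 hz.1
      have hzΛ : z ∈ latBox L := inner1_subset_latBox (nbrs_inner2 (hSin2 x hx) hzx)
      exact Finset.mem_filter.2 ⟨hzΛ, h1⟩
    have hNI : k + sParam k + 1 ≤ (S.biUnion nbrs \ S).card + P.card := by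
      have h := htiso
      rw [hcardS] at h
      have hPc : ((S ×ˢ S).filter (fun p => adjacent p.1 p.2)).card = P.card := rfl
      omega
    -- competitor
    obtain ⟨ξ, hξ2, hξin, hξB, hξ1⟩ := competitor L k hk1 hk
    have hmin2 := hmin ξ ⟨hξ2, hξin⟩
    unfold energy at hmin2
    rw [hk2, hξ2] at hmin2
    -- final numeric contradiction
    set Bn := numBonds η with hBn
    set n1 := numType1 η with hn1
    set Nc := (S.biUnion nbrs \ S).card with hNc
    set Ic := P.card with hIc
    set Bx := numBonds ξ with hBx
    set n1x := numType1 ξ with hn1x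
    set sk := sParam k with hsk
    have f1 : U * ((Bn : ℝ) + Ic) ≤ U * (4 * k) := by
      apply mul_le_mul_of_nonneg_left _ hU.le
      exact_mod_cast hBI
    have f2 : U * (4 * (k : ℝ)) ≤ U * Bx := by
      apply mul_le_mul_of_nonneg_left _ hU.le
      exact_mod_cast hξB
    have f3 : Δ1 * ((k : ℝ) + sk + 1) ≤ Δ1 * (Nc + Ic) := by
      apply mul_le_mul_of_nonneg_left _ hΔ1.le
      exact_mod_cast hNI
    have f4 : Δ1 * (Nc : ℝ) ≤ Δ1 * n1 := by
      apply mul_le_mul_of_nonneg_left _ hΔ1.le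
      exact_mod_cast hNn1
    have f5 : Δ1 * (n1x : ℝ) ≤ Δ1 * ((k : ℝ) + sk + 1) := by
      apply mul_le_mul_of_nonneg_left _ hΔ1.le
      exact_mod_cast hξ1
    have f6 : 2 * (U - Δ1) ≤ (Ic : ℝ) * (U - Δ1) := by
      apply mul_le_mul_of_nonneg_right _ (by linarith)
      exact_mod_cast hI2
    linarith [hmin2, f1, f2, f3, f4, f5, f6]
  · -- no two particles of type 2 are adjacent : count the bonds
    have hBond : numBonds η = 4 * k := by
      rw [hBFnum, ← hcardS, ← card_pairT S]
      congr 1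
      apply Finset.Subset.antisymm hBFsub
      intro pr hpr
      obtain ⟨h2, h1⟩ := mem_pairT.1 hpr
      have hxin : pr.2 ∈ inner2 (latBox L) := hSin2 _ h2
      have hv2 : η.val pr.2 = 2 := hSval _ h2
      have hv0 : η.val pr.1 ≠ 0 := hA2 _ hv2 _ h1
      have hvne2 : η.val pr.1 ≠ 2 := by
        intro h
        exact hadjex ⟨pr.2, h2, pr.1, hmemS _ h, mem_nbrs.1 h1⟩
      have hv1 : η.val pr.1 = 1 := fin3 _ hv0 hvne2
      rw [hBFdef, Finset.mem_filter, Finset.mem_product]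
      exact ⟨⟨nbrs_inner2 hxin h1, inner2_subset_inner1 hxin⟩,
        adjacent_symm (mem_nbrs.1 h1), hv1, hv2⟩
    exact ⟨⟨hk2, hin2⟩, hBond, hA1⟩
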